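/- Let L be a regular-epi localization functor on XMod and let 1 → N →(κ) T →(α) Q → 1 be an L-flat short exact sequence, with fiberwise localization the quotient sequence 1 → LN → T/κ(ker ℓ^N) → Q → 1 obtained by quotienting T by the normal subcrossed module κ(ker ℓ^N). Then for any morphism g : Q' → Q, the pullback along g of this fiberwise localization, 1 → LN → (T/κ(ker ℓ^N)) ×_Q Q' → Q' → 1, together with the morphism T ×_Q Q' → (T/κ(ker ℓ^N)) ×_Q Q' induced by the quotient map, is a fiberwise localization of the pullback sequence 1 → N → T ×_Q Q' → Q' → 1. -/

import Mathlib

set_option linter.unusedVariables false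

/-- A crossed module of groups `(M, G, d)` with `G` acting on `M`. -/
structure XMod : Type 1 where
  M : Type
  G : Type
  [grpM : Group M]
  [grpG : Group G]
  act : G →* MulAut M
  d : M →* G
  act_d : ∀ (b : G) (t : M), d (act b t) = b * d t * b⁻¹
  peiffer : ∀ (t s : M), act (d t) s = t * s * t⁻¹

attribute [instance] XMod.grpM XMod.grpG

/-- A morphism of crossed modules. -/
structure XModHom (N T : XMod) where
  f1 : N.M →* T.M
  f2 : N.G →* T.G
  comm_d : ∀ n, T.d (f1 n) = f2 (N.d n)
  equiv : ∀ (b : N.G) (n : N.M), f1 (N.act b n) = T.act (f2 b) (f1 n)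

namespace XModHom

theorem ext {N T : XMod} {f g : XModHom N T} (h1 : f.f1 = g.f1) (h2 : f.f2 = g.f2) :
    f = g := by
  cases f; cases g; cases h1; cases h2; rfl

/-- The identity morphism. -/
def id (T : XMod) : XModHom T T :=
  ⟨MonoidHom.id _, MonoidHom.id _, fun _ => rfl, fun _ _ => rfl⟩

/-- Composition of morphisms of crossed modules. -/
def comp {A B C : XMod} (g : XModHom B C) (f : XModHom A B) : XModHom A C where
  f1 := g.f1.comp f.f1
  f2 := g.f2.comp f.f2
  comm_d := by intro n; simp [MonoidHom.comp_apply, g.comm_d, f.comm_d]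
  equiv := by intro b n; simp [MonoidHom.comp_apply, f.equiv, g.equiv]

/-- The trivial morphism of crossed modules. -/
def triv (A B : XMod) : XModHom A B where
  f1 := 1
  f2 := 1
  comm_d := by intro n; simp
  equiv := by intro b n; simp

/-- A morphism of crossed modules is an isomorphism if it has a two-sided inverse. -/
def IsIso {A B : XMod} (f : XModHom A B) : Prop :=
  ∃ g : XModHom B A, comp g f = id A ∧ comp f g = id B

/-- Regular epimorphisms of crossed modules are exactly the componentwise
surjective morphisms. -/
def RegEpi {A B : XMod} (f : XModHom A B) : Prop :=
  Function.Surjective f.f1 ∧ Function.Surjective f.f2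

/-- `κ` is a kernel of `α` (in the categorical sense). -/
def IsKernelOf {N T Q : XMod} (κ : XModHom N T) (α : XModHom T Q) : Prop :=
  comp α κ = triv N Q ∧
    ∀ (X : XMod) (u : XModHom X T), comp α u = triv X Q →
      ∃! v : XModHom X N, comp κ v = u

end XModHom

/-- `1 → N → T → Q → 1` is a short exact sequence of crossed modules. -/
def ShortExact {N T Q : XMod} (κ : XModHom N T) (α : XModHom T Q) : Prop :=
  XModHom.IsKernelOf κ α ∧ XModHom.RegEpi α
/-- A localization functor (coaugmented idempotent functor) on `XMod`. -/
structure LocalizationFunctor where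
  obj : XMod → XMod
  map : ∀ {A B : XMod}, XModHom A B → XModHom (obj A) (obj B)
  map_id : ∀ A : XMod, map (XModHom.id A) = XModHom.id (obj A)
  map_comp : ∀ {A B C : XMod} (f : XModHom A B) (g : XModHom B C),
    map (XModHom.comp g f) = XModHom.comp (map g) (map f)
  ell : ∀ A : XMod, XModHom A (obj A)
  natural : ∀ {A B : XMod} (f : XModHom A B),
    XModHom.comp (ell B) f = XModHom.comp (map f) (ell A)
  iso_ell_obj : ∀ A : XMod, XModHom.IsIso (ell (obj A))
  iso_map_ell : ∀ A : XMod, XModHom.IsIso (map (ell A))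

namespace LocalizationFunctor

/-- A crossed module is `L`-local if its coaugmentation is an isomorphism. -/
def IsLocal (L : LocalizationFunctor) (X : XMod) : Prop :=
  XModHom.IsIso (L.ell X)

/-- `L` is a regular-epi localization if every coaugmentation morphism is a
regular epimorphism. -/
def RegEpiLoc (L : LocalizationFunctor) : Prop :=
  ∀ X : XMod, XModHom.RegEpi (L.ell X)

/-- A short exact sequence is `L`-flat if applying `L` yields a short exact sequence. -/
def LFlat (L : LocalizationFunctor) {N T Q : XMod} (κ : XModHom N T) (α : XModHom T Q) : Prop :=
  ShortExact (L.map κ) (L.map α)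

end LocalizationFunctor
section Pullback

variable {T Q Q' : XMod} (α : XModHom T Q) (g : XModHom Q' Q)

/-- Level-1 part of the pullback `T ×_Q Q'`, computed componentwise. -/
def pbM : Subgroup (T.M × Q'.M) where
  carrier := {p | α.f1 p.1 = g.f1 p.2}
  one_mem' := by simp
  mul_mem' := by
    intro a b ha hb
    simp only [Set.mem_setOf_eq, Prod.fst_mul, Prod.snd_mul, map_mul] at *
    rw [ha, hb]
  inv_mem' := by
    intro a ha
    simp only [Set.mem_setOf_eq, Prod.fst_inv, Prod.snd_inv, map_inv] at *
    rw [ha]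

/-- Level-2 part of the pullback `T ×_Q Q'`, computed componentwise. -/
def pbG : Subgroup (T.G × Q'.G) where
  carrier := {p | α.f2 p.1 = g.f2 p.2}
  one_mem' := by simp
  mul_mem' := by
    intro a b ha hb
    simp only [Set.mem_setOf_eq, Prod.fst_mul, Prod.snd_mul, map_mul] at *
    rw [ha, hb]
  inv_mem' := by
    intro a ha
    simp only [Set.mem_setOf_eq, Prod.fst_inv, Prod.snd_inv, map_inv] at *
    rw [ha]

theorem mem_pbM_iff (p : T.M × Q'.M) : p ∈ pbM α g ↔ α.f1 p.1 = g.f1 p.2 := Iff.rfl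

theorem mem_pbG_iff (p : T.G × Q'.G) : p ∈ pbG α g ↔ α.f2 p.1 = g.f2 p.2 := Iff.rfl

theorem pb_act_mem {b : T.G × Q'.G} (hb : b ∈ pbG α g) {p : T.M × Q'.M}
    (hp : p ∈ pbM α g) : (T.act b.1 p.1, Q'.act b.2 p.2) ∈ pbM α g := by
  have hb' : α.f2 b.1 = g.f2 b.2 := hb
  have hp' : α.f1 p.1 = g.f1 p.2 := hp
  show α.f1 (T.act b.1 p.1) = g.f1 (Q'.act b.2 p.2)
  rw [α.equiv, g.equiv, hb', hp']

theorem XMod.act_inv_act (X : XMod) (b : X.G) (t : X.M) :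
    X.act b⁻¹ (X.act b t) = t := by
  rw [← MulAut.mul_apply, ← map_mul, inv_mul_cancel, map_one, MulAut.one_apply]

theorem XMod.act_act_inv (X : XMod) (b : X.G) (t : X.M) :
    X.act b (X.act b⁻¹ t) = t := by
  rw [← MulAut.mul_apply, ← map_mul, mul_inv_cancel, map_one, MulAut.one_apply]

/-- The action of an element of the pullback on the level-1 part, as a group
automorphism. -/
def pbActEquiv (b : ↥(pbG α g)) : ↥(pbM α g) ≃* ↥(pbM α g) where
  toFun p := ⟨(T.act b.1.1 p.1.1, Q'.act b.1.2 p.1.2), pb_act_mem α g b.2 p.2⟩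
  invFun p := ⟨(T.act b.1.1⁻¹ p.1.1, Q'.act b.1.2⁻¹ p.1.2),
    pb_act_mem α g ((pbG α g).inv_mem b.2) p.2⟩
  left_inv p := by
    apply Subtype.ext
    exact Prod.ext (T.act_inv_act _ _) (Q'.act_inv_act _ _)
  right_inv p := by
    apply Subtype.ext
    exact Prod.ext (T.act_act_inv _ _) (Q'.act_act_inv _ _)
  map_mul' p q := by
    apply Subtype.ext
    exact Prod.ext (map_mul _ _ _) (map_mul _ _ _)

/-- The pullback `T ×_Q Q'` of `α : T → Q` along `g : Q' → Q`, computed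
componentwise. -/
def pbXMod : XMod where
  M := ↥(pbM α g)
  G := ↥(pbG α g)
  act :=
    { toFun := pbActEquiv α g
      map_one' := by
        apply MulEquiv.ext
        intro p
        apply Subtype.ext
        apply Prod.ext
        · show T.act (1 : ↥(pbG α g)).1.1 p.1.1 = p.1.1
          simp
        · show Q'.act (1 : ↥(pbG α g)).1.2 p.1.2 = p.1.2
          simp
      map_mul' := by
        intro b c
        apply MulEquiv.ext
        intro p
        apply Subtype.ext
        apply Prod.ext
        · show T.act (b * c).1.1 p.1.1 = T.act b.1.1 (T.act c.1.1 p.1.1)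
          simp [map_mul]
        · show Q'.act (b * c).1.2 p.1.2 = Q'.act b.1.2 (Q'.act c.1.2 p.1.2)
          simp [map_mul] }
  d :=
    { toFun := fun p => ⟨(T.d p.1.1, Q'.d p.1.2), by
        have hp : α.f1 p.1.1 = g.f1 p.1.2 := p.2
        show α.f2 (T.d p.1.1) = g.f2 (Q'.d p.1.2)
        rw [← α.comm_d, ← g.comm_d, hp]⟩
      map_one' := by
        apply Subtype.ext
        apply Prod.ext <;> simp
      map_mul' := by
        intro p q
        apply Subtype.ext
        apply Prod.ext <;> simp }
  act_d := by
    intro b p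
    apply Subtype.ext
    apply Prod.ext
    · exact T.act_d _ _
    · exact Q'.act_d _ _
  peiffer := by
    intro p q
    apply Subtype.ext
    apply Prod.ext
    · exact T.peiffer _ _
    · exact Q'.peiffer _ _

/-- First projection of the pullback. -/
def pbFst : XModHom (pbXMod α g) T where
  f1 := (MonoidHom.fst T.M Q'.M).comp (pbM α g).subtype
  f2 := (MonoidHom.fst T.G Q'.G).comp (pbG α g).subtype
  comm_d := fun _ => rfl
  equiv := fun _ _ => rfl

/-- Second projection of the pullback. -/
def pbSnd : XModHom (pbXMod α g) Q' where
  f1 := (MonoidHom.snd T.M Q'.M).comp (pbM α g).subtype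
  f2 := (MonoidHom.snd T.G Q'.G).comp (pbG α g).subtype
  comm_d := fun _ => rfl
  equiv := fun _ _ => rfl

end Pullback
section PullbackMaps

variable {N T Q Q' : XMod}

/-- The induced morphism from the kernel `N` into the pullback `T ×_Q Q'`. -/
def pbIn (κ : XModHom N T) (α : XModHom T Q) (g : XModHom Q' Q)
    (h : XModHom.comp α κ = XModHom.triv N Q) : XModHom N (pbXMod α g) where
  f1 :=
    { toFun := fun n => ⟨(κ.f1 n, 1), by
        show α.f1 (κ.f1 n) = g.f1 1
        have := congrArg XModHom.f1 h
        have h' : α.f1 (κ.f1 n) = 1 := DFunLike.congr_fun this n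
        rw [h', map_one]⟩
      map_one' := by
        apply Subtype.ext
        apply Prod.ext <;> (try simp) <;> rfl
      map_mul' := by
        intro a b
        apply Subtype.ext
        show (κ.f1 (a * b), (1 : Q'.M)) = (κ.f1 a, (1 : Q'.M)) * (κ.f1 b, (1 : Q'.M))
        simp [Prod.ext_iff, map_mul] }
  f2 :=
    { toFun := fun n => ⟨(κ.f2 n, 1), by
        show α.f2 (κ.f2 n) = g.f2 1
        have := congrArg XModHom.f2 h
        have h' : α.f2 (κ.f2 n) = 1 := DFunLike.congr_fun this n
        rw [h', map_one]⟩
      map_one' := by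
        apply Subtype.ext
        apply Prod.ext <;> (try simp) <;> rfl
      map_mul' := by
        intro a b
        apply Subtype.ext
        show (κ.f2 (a * b), (1 : Q'.G)) = (κ.f2 a, (1 : Q'.G)) * (κ.f2 b, (1 : Q'.G))
        simp [Prod.ext_iff, map_mul] }
  comm_d := by
    intro n
    apply Subtype.ext
    apply Prod.ext
    · exact κ.comm_d n
    · show Q'.d (1 : Q'.M) = 1
      simp
  equiv := by
    intro b n
    apply Subtype.ext
    apply Prod.ext
    · exact κ.equiv b n
    · show (1 : Q'.M) = Q'.act 1 1
      simp

/-- The induced morphism into the pullback `T ×_Q Q'` from an object mapping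
trivially to `Q` through the second leg. -/
def pbInR (α : XModHom T Q) (g : XModHom Q' Q) {X : XMod} (u : XModHom X Q')
    (h : XModHom.comp g u = XModHom.triv X Q) : XModHom X (pbXMod α g) where
  f1 :=
    { toFun := fun n => ⟨(1, u.f1 n), by
        show α.f1 1 = g.f1 (u.f1 n)
        have := congrArg XModHom.f1 h
        have h' : g.f1 (u.f1 n) = 1 := DFunLike.congr_fun this n
        rw [h', map_one]⟩
      map_one' := by
        apply Subtype.ext
        apply Prod.ext <;> (try simp) <;> rfl
      map_mul' := by
        intro a b
        apply Subtype.ext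
        show ((1 : T.M), u.f1 (a * b)) = ((1 : T.M), u.f1 a) * ((1 : T.M), u.f1 b)
        simp [Prod.ext_iff, map_mul] }
  f2 :=
    { toFun := fun n => ⟨(1, u.f2 n), by
        show α.f2 1 = g.f2 (u.f2 n)
        have := congrArg XModHom.f2 h
        have h' : g.f2 (u.f2 n) = 1 := DFunLike.congr_fun this n
        rw [h', map_one]⟩
      map_one' := by
        apply Subtype.ext
        apply Prod.ext <;> (try simp) <;> rfl
      map_mul' := by
        intro a b
        apply Subtype.ext
        show ((1 : T.G), u.f2 (a * b)) = ((1 : T.G), u.f2 a) * ((1 : T.G), u.f2 b)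
        simp [Prod.ext_iff, map_mul] }
  comm_d := by
    intro n
    apply Subtype.ext
    apply Prod.ext
    · show T.d (1 : T.M) = 1
      simp
    · exact u.comm_d n
  equiv := by
    intro b n
    apply Subtype.ext
    apply Prod.ext
    · show (1 : T.M) = T.act 1 1
      simp
    · exact u.equiv b n

/-- The morphism of pullbacks `T ×_Q Q' → E ×_Q Q'` induced by `f : T → E`
with `p ∘ f = α`. -/
def pbMapL {E : XMod} (α : XModHom T Q) (p : XModHom E Q) (g : XModHom Q' Q)
    (f : XModHom T E) (hpf : XModHom.comp p f = α) :
    XModHom (pbXMod α g) (pbXMod p g) where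
  f1 :=
    { toFun := fun w => ⟨(f.f1 w.1.1, w.1.2), by
        show p.f1 (f.f1 w.1.1) = g.f1 w.1.2
        have h' : p.f1 (f.f1 w.1.1) = α.f1 w.1.1 :=
          DFunLike.congr_fun (congrArg XModHom.f1 hpf) w.1.1
        rw [h']
        exact w.2⟩
      map_one' := by
        apply Subtype.ext
        apply Prod.ext <;> (try simp) <;> first | rfl | exact map_one f.f1
      map_mul' := by
        intro a b
        apply Subtype.ext
        apply Prod.ext
        · exact map_mul f.f1 a.1.1 b.1.1
        · rfl }
  f2 :=
    { toFun := fun w => ⟨(f.f2 w.1.1, w.1.2), by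
        show p.f2 (f.f2 w.1.1) = g.f2 w.1.2
        have h' : p.f2 (f.f2 w.1.1) = α.f2 w.1.1 :=
          DFunLike.congr_fun (congrArg XModHom.f2 hpf) w.1.1
        rw [h']
        exact w.2⟩
      map_one' := by
        apply Subtype.ext
        apply Prod.ext <;> (try simp) <;> first | rfl | exact map_one f.f2
      map_mul' := by
        intro a b
        apply Subtype.ext
        apply Prod.ext
        · exact map_mul f.f2 a.1.1 b.1.1
        · rfl }
  comm_d := by
    intro w
    apply Subtype.ext
    apply Prod.ext
    · exact f.comm_d _
    · rfl
  equiv := by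
    intro b w
    apply Subtype.ext
    apply Prod.ext
    · exact f.equiv _ _
    · rfl

end PullbackMaps

/-- A commuting square is a pullback square (categorical definition). -/
def IsPullbackSquare {P X Y Z : XMod} (p1 : XModHom P X) (p2 : XModHom P Y)
    (f : XModHom X Z) (h : XModHom Y Z) : Prop :=
  XModHom.comp f p1 = XModHom.comp h p2 ∧
    ∀ (W : XMod) (u : XModHom W X) (v : XModHom W Y),
      XModHom.comp f u = XModHom.comp h v →
        ∃! w : XModHom W P, XModHom.comp p1 w = u ∧ XModHom.comp p2 w = v

namespace LocalizationFunctor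

/-- `L` is admissible for the class of regular epimorphisms: applying `L` to the
pullback of a regular epimorphism `α : LT → LQ` along the coaugmentation
`ℓ^Q : Q → LQ` yields again a pullback square. -/
def Admissible (L : LocalizationFunctor) : Prop :=
  ∀ (T Q : XMod) (α : XModHom (L.obj T) (L.obj Q)), XModHom.RegEpi α →
    IsPullbackSquare (L.map (pbFst α (L.ell Q))) (L.map (pbSnd α (L.ell Q)))
      (L.map α) (L.map (L.ell Q))

/-- `L` is conditionally flat: the pullback of any `L`-flat short exact sequence
along any morphism is again `L`-flat. -/
def ConditionallyFlat (L : LocalizationFunctor) : Prop :=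
  ∀ (N T Q : XMod) (κ : XModHom N T) (α : XModHom T Q) (hse : ShortExact κ α),
    L.LFlat κ α →
      ∀ (Q' : XMod) (g : XModHom Q' Q),
        L.LFlat (pbIn κ α g hse.1.1) (pbSnd α g)

/-- A short exact sequence `1 → N → T → Q → 1` admits a fiberwise localization:
there is a short exact sequence `1 → LN → E → Q → 1` together with an
`L`-equivalence `T → E` compatible with the coaugmentation of `N`. -/
def AdmitsFiberwise (L : LocalizationFunctor) {N T Q : XMod} (κ : XModHom N T)
    (α : XModHom T Q) : Prop :=
  ∃ (E : XMod) (j : XModHom (L.obj N) E) (p : XModHom E Q) (e : XModHom T E),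
    ShortExact j p ∧ XModHom.IsIso (L.map e) ∧
      XModHom.comp e κ = XModHom.comp j (L.ell N) ∧ XModHom.comp p e = α

end LocalizationFunctor
section Kernel

variable {N T : XMod} (f : XModHom N T)

theorem ker_act_mem {b : N.G} (hb : b ∈ f.f2.ker) {n : N.M} (hn : n ∈ f.f1.ker) :
    N.act b n ∈ f.f1.ker := by
  have hb' : f.f2 b = 1 := hb
  have hn' : f.f1 n = 1 := hn
  show f.f1 (N.act b n) = 1
  rw [f.equiv, hb', hn', map_one]

/-- The automorphism of `ker f.f1` induced by an element of `ker f.f2`. -/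
def kerActEquiv (b : ↥f.f2.ker) : ↥f.f1.ker ≃* ↥f.f1.ker where
  toFun n := ⟨N.act b.1 n.1, ker_act_mem f b.2 n.2⟩
  invFun n := ⟨N.act b.1⁻¹ n.1, ker_act_mem f (f.f2.ker.inv_mem b.2) n.2⟩
  left_inv n := Subtype.ext (N.act_inv_act _ _)
  right_inv n := Subtype.ext (N.act_act_inv _ _)
  map_mul' n m := Subtype.ext (map_mul _ _ _)

/-- The kernel of a morphism of crossed modules, computed componentwise. -/
def kerXMod : XMod where
  M := ↥f.f1.ker
  G := ↥f.f2.ker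
  act :=
    { toFun := kerActEquiv f
      map_one' := by
        apply MulEquiv.ext
        intro n
        apply Subtype.ext
        show N.act (1 : ↥f.f2.ker).1 n.1 = n.1
        simp
      map_mul' := by
        intro b c
        apply MulEquiv.ext
        intro n
        apply Subtype.ext
        show N.act (b * c).1 n.1 = N.act b.1 (N.act c.1 n.1)
        simp [map_mul] }
  d :=
    { toFun := fun n => ⟨N.d n.1, by
        have hn : f.f1 n.1 = 1 := n.2
        show f.f2 (N.d n.1) = 1
        rw [← f.comm_d, hn, map_one]⟩
      map_one' := by
        apply Subtype.ext
        simp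
      map_mul' := by
        intro a b
        apply Subtype.ext
        show N.d (a * b).1 = N.d a.1 * N.d b.1
        simp }
  act_d := by
    intro b n
    apply Subtype.ext
    exact N.act_d _ _
  peiffer := by
    intro n m
    apply Subtype.ext
    exact N.peiffer _ _

/-- The inclusion of the kernel. -/
def kerIncl : XModHom (kerXMod f) N where
  f1 := f.f1.ker.subtype
  f2 := f.f2.ker.subtype
  comm_d := fun _ => rfl
  equiv := fun _ _ => rfl

end Kernel

/-- A crossed module is trivial if both underlying groups are trivial. -/
def XMod.IsTrivial (X : XMod) : Prop :=
  (∀ m : X.M, m = 1) ∧ ∀ b : X.G, b = 1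

/-- `X` is `A`-null if the only morphism of crossed modules `A → X` is the
trivial one. -/
def ANull (A X : XMod) : Prop :=
  ∀ φ : XModHom A X, φ = XModHom.triv A X

/-- `X` is `f`-local if precomposition with `f` is a bijection on morphisms
into `X`. -/
def FLocal {B C : XMod} (f : XModHom B C) (X : XMod) : Prop :=
  Function.Bijective fun φ : XModHom C X => XModHom.comp φ f

/-- The subgroup `[N₂, N₁]` of `N₁` generated by the elements `ᵇt·t⁻¹`. -/
def actCommutator (N : XMod) : Subgroup N.M :=
  Subgroup.closure {x | ∃ (b : N.G) (t : N.M), x = N.act b t * t⁻¹}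

section NormalClosure

variable {A W : XMod} (φ : XModHom A W)

/-- The level-2 part of the normal closure of the image of `φ`:
the normal closure of `φ₂(A₂)` in `W₂`. -/
def ncl2 : Subgroup W.G :=
  Subgroup.normalClosure (Set.range φ.f2)

/-- The level-1 part of the normal closure of the image of `φ`:
the subgroup `φ₁(A₁)^{W₂}·[φ₂(A₂)^{W₂}, W₁]` of `W₁`. -/
def ncl1 : Subgroup W.M :=
  Subgroup.closure
    ({x | ∃ (b : W.G) (m : A.M), x = W.act b (φ.f1 m)} ∪
      {x | ∃ s ∈ ncl2 φ, ∃ w : W.M, x = W.act s w * w⁻¹})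

end NormalClosure


namespace XModHom

theorem comp_assoc' {A B C D : XMod} (h : XModHom C D) (g : XModHom B C) (f : XModHom A B) :
    comp (comp h g) f = comp h (comp g f) := rfl

theorem cancel_right_of_surj {A B C : XMod} {q : XModHom A B} (hq : RegEpi q)
    {s t : XModHom B C} (h : comp s q = comp t q) : s = t := by
  apply ext
  · ext b
    obtain ⟨a, rfl⟩ := hq.1 b
    exact DFunLike.congr_fun (congrArg f1 h) a
  · ext b
    obtain ⟨a, rfl⟩ := hq.2 b
    exact DFunLike.congr_fun (congrArg f2 h) a

theorem exists_factor {A B C : XMod} (q : XModHom A B) (hq : RegEpi q) (r : XModHom A C)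
    (h1 : ∀ a, q.f1 a = 1 → r.f1 a = 1) (h2 : ∀ b, q.f2 b = 1 → r.f2 b = 1) :
    ∃ u : XModHom B C, comp u q = r := by
  have hco1 : ∀ x y, q.f1 x = q.f1 y → r.f1 x = r.f1 y := by
    intro x y h
    have := h1 (x * y⁻¹) (by rw [map_mul, map_inv, h, mul_inv_cancel])
    rw [map_mul, map_inv] at this
    exact mul_inv_eq_one.mp this
  have hco2 : ∀ x y, q.f2 x = q.f2 y → r.f2 x = r.f2 y := by
    intro x y h
    have := h2 (x * y⁻¹) (by rw [map_mul, map_inv, h, mul_inv_cancel])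
    rw [map_mul, map_inv] at this
    exact mul_inv_eq_one.mp this
  set l1 := Function.surjInv hq.1 with hl1def
  have hl1 : ∀ b, q.f1 (l1 b) = b := Function.surjInv_eq hq.1
  set l2 := Function.surjInv hq.2 with hl2def
  have hl2 : ∀ b, q.f2 (l2 b) = b := Function.surjInv_eq hq.2
  refine ⟨⟨{ toFun := fun b => r.f1 (l1 b), map_one' := ?_, map_mul' := ?_ },
          { toFun := fun b => r.f2 (l2 b), map_one' := ?_, map_mul' := ?_ }, ?_, ?_⟩, ?_⟩
  · exact (hco1 _ 1 (by rw [hl1, map_one])).trans (map_one r.f1)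
  · intro a b
    exact (hco1 _ (l1 a * l1 b) (by rw [hl1, map_mul, hl1, hl1])).trans (map_mul r.f1 _ _)
  · exact (hco2 _ 1 (by rw [hl2, map_one])).trans (map_one r.f2)
  · intro a b
    exact (hco2 _ (l2 a * l2 b) (by rw [hl2, map_mul, hl2, hl2])).trans (map_mul r.f2 _ _)
  · intro b
    show C.d (r.f1 (l1 b)) = r.f2 (l2 (B.d b))
    rw [r.comm_d]
    exact hco2 _ _ (by rw [← q.comm_d, hl1, hl2])
  · intro b m
    show r.f1 (l1 (B.act b m)) = C.act (r.f2 (l2 b)) (r.f1 (l1 m))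
    rw [← r.equiv]
    exact hco1 _ _ (by rw [hl1, q.equiv, hl2, hl1])
  · apply ext
    · ext a
      exact hco1 _ _ (hl1 _)
    · ext a
      exact hco2 _ _ (hl2 _)

end XModHom

theorem iso_map_of_factor (L : LocalizationFunctor) (hL : L.RegEpiLoc)
    {A B : XMod} (q : XModHom A B) (hq : XModHom.RegEpi q)
    (u : XModHom B (L.obj A)) (huq : XModHom.comp u q = L.ell A) :
    XModHom.IsIso (L.map q) := by
  have hlB : L.ell B = XModHom.comp (L.map q) u := by
    apply XModHom.cancel_right_of_surj hq
    rw [L.natural q, XModHom.comp_assoc', huq]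
  obtain ⟨e, he1, he2⟩ := L.iso_map_ell A
  have hw : XModHom.comp (XModHom.comp e (L.map u)) (L.map q) = XModHom.id (L.obj A) := by
    rw [XModHom.comp_assoc', ← L.map_comp q u, huq]
    exact he1
  have hsurj1 : Function.Surjective (L.map q).f1 := by
    intro x
    obtain ⟨y, hy⟩ := (hL B).1 x
    refine ⟨u.f1 y, ?_⟩
    rw [← hy, hlB]; rfl
  have hsurj2 : Function.Surjective (L.map q).f2 := by
    intro x
    obtain ⟨y, hy⟩ := (hL B).2 x
    refine ⟨u.f2 y, ?_⟩
    rw [← hy, hlB]; rfl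
  refine ⟨XModHom.comp e (L.map u), hw, ?_⟩
  apply XModHom.ext
  · ext x
    obtain ⟨y, rfl⟩ := hsurj1 x
    show (L.map q).f1 ((XModHom.comp e (L.map u)).f1 ((L.map q).f1 y)) = (L.map q).f1 y
    rw [show (XModHom.comp e (L.map u)).f1 ((L.map q).f1 y) = y from
      DFunLike.congr_fun (congrArg XModHom.f1 hw) y]
  · ext x
    obtain ⟨y, rfl⟩ := hsurj2 x
    show (L.map q).f2 ((XModHom.comp e (L.map u)).f2 ((L.map q).f2 y)) = (L.map q).f2 y
    rw [show (XModHom.comp e (L.map u)).f2 ((L.map q).f2 y) = y from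
      DFunLike.congr_fun (congrArg XModHom.f2 hw) y]

/-- Let `L` be a regular-epi localization functor and let
`1 → N →(κ) T →(α) Q → 1` be an `L`-flat short exact sequence, with fiberwise
localization the quotient sequence `1 → LN →(j) E →(p) Q → 1` obtained by
quotienting `T` by the normal subcrossed module `κ(ker ℓ^N)` (here `E` is
presented as such a quotient by the regular epimorphism `f : T → E` whose
kernel is `κ(ker ℓ^N)`).  Then for any morphism `g : Q' → Q`, the pullback of
this fiberwise localization along `g`, together with the induced morphism
`T ×_Q Q' → E ×_Q Q'`, is a fiberwise localization of the pullback sequence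
`1 → N → T ×_Q Q' → Q' → 1`. -/
theorem pullback_of_fiberwise_is_fiberwise_of_pullback
    (L : LocalizationFunctor) (hL : L.RegEpiLoc)
    {N T Q : XMod} (κ : XModHom N T) (α : XModHom T Q)
    (hse : ShortExact κ α) (hflat : L.LFlat κ α)
    (E : XMod) (j : XModHom (L.obj N) E) (p : XModHom E Q) (f : XModHom T E)
    (hjp : ShortExact j p)
    (hfequiv : XModHom.IsIso (L.map f))
    (hsq1 : XModHom.comp f κ = XModHom.comp j (L.ell N))
    (hsq2 : XModHom.comp p f = α)
    (hfreg : XModHom.RegEpi f)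
    (hker : XModHom.IsKernelOf (XModHom.comp κ (kerIncl (L.ell N))) f)
    {Q' : XMod} (g : XModHom Q' Q) :
    ShortExact (pbIn j p g hjp.1.1) (pbSnd p g) ∧
    XModHom.IsIso (L.map (pbMapL α p g f hsq2)) ∧
    XModHom.comp (pbMapL α p g f hsq2) (pbIn κ α g hse.1.1) =
      XModHom.comp (pbIn j p g hjp.1.1) (L.ell N) ∧
    XModHom.comp (pbSnd p g) (pbMapL α p g f hsq2) = pbSnd α g := by
  -- set-level kernel of f
  have htriv : XModHom.comp f (kerIncl f) = XModHom.triv (kerXMod f) E := by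
    apply XModHom.ext
    · ext x
      exact x.2
    · ext x
      exact x.2
  obtain ⟨v, hv, -⟩ := hker.2 (kerXMod f) (kerIncl f) htriv
  have hk1 : ∀ t : T.M, f.f1 t = 1 → ∃ n : N.M, (L.ell N).f1 n = 1 ∧ κ.f1 n = t := by
    intro t ht
    refine ⟨(v.f1 ⟨t, ht⟩).1, (v.f1 ⟨t, ht⟩).2, ?_⟩
    exact DFunLike.congr_fun (congrArg XModHom.f1 hv) ⟨t, ht⟩
  have hk2 : ∀ t : T.G, f.f2 t = 1 → ∃ n : N.G, (L.ell N).f2 n = 1 ∧ κ.f2 n = t := by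
    intro t ht
    refine ⟨(v.f2 ⟨t, ht⟩).1, (v.f2 ⟨t, ht⟩).2, ?_⟩
    exact DFunLike.congr_fun (congrArg XModHom.f2 hv) ⟨t, ht⟩
  set φ := pbMapL α p g f hsq2 with hφdef
  have hφsurj : XModHom.RegEpi φ := by
    constructor
    · rintro ⟨⟨e, m'⟩, hem⟩
      obtain ⟨t, ht⟩ := hfreg.1 e
      have hα : α.f1 t = g.f1 m' := by
        have h' : p.f1 (f.f1 t) = α.f1 t := DFunLike.congr_fun (congrArg XModHom.f1 hsq2) t
        rw [← h', ht]
        exact hem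
      exact ⟨⟨(t, m'), hα⟩, Subtype.ext (Prod.ext ht rfl)⟩
    · rintro ⟨⟨e, m'⟩, hem⟩
      obtain ⟨t, ht⟩ := hfreg.2 e
      have hα : α.f2 t = g.f2 m' := by
        have h' : p.f2 (f.f2 t) = α.f2 t := DFunLike.congr_fun (congrArg XModHom.f2 hsq2) t
        rw [← h', ht]
        exact hem
      exact ⟨⟨(t, m'), hα⟩, Subtype.ext (Prod.ext ht rfl)⟩
  have hcond1 : ∀ a, φ.f1 a = 1 → (L.ell (pbXMod α g)).f1 a = 1 := by
    intro a ha
    have ha' : ((f.f1 a.1.1, a.1.2) : E.M × Q'.M) = (1, 1) := congrArg Subtype.val ha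
    have h1a : f.f1 a.1.1 = 1 := congrArg Prod.fst ha'
    have h2a : a.1.2 = (1 : Q'.M) := congrArg Prod.snd ha'
    obtain ⟨n, hn1, hn2⟩ := hk1 a.1.1 h1a
    have haeq : a = (pbIn κ α g hse.1.1).f1 n := Subtype.ext (Prod.ext hn2.symm h2a)
    have hnat : (L.ell (pbXMod α g)).f1 ((pbIn κ α g hse.1.1).f1 n) =
        (L.map (pbIn κ α g hse.1.1)).f1 ((L.ell N).f1 n) :=
      DFunLike.congr_fun (congrArg XModHom.f1 (L.natural (pbIn κ α g hse.1.1))) n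
    rw [haeq, hnat, hn1, map_one]
  have hcond2 : ∀ a, φ.f2 a = 1 → (L.ell (pbXMod α g)).f2 a = 1 := by
    intro a ha
    have ha' : ((f.f2 a.1.1, a.1.2) : E.G × Q'.G) = (1, 1) := congrArg Subtype.val ha
    have h1a : f.f2 a.1.1 = 1 := congrArg Prod.fst ha'
    have h2a : a.1.2 = (1 : Q'.G) := congrArg Prod.snd ha'
    obtain ⟨n, hn1, hn2⟩ := hk2 a.1.1 h1a
    have haeq : a = (pbIn κ α g hse.1.1).f2 n := Subtype.ext (Prod.ext hn2.symm h2a)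
    have hnat : (L.ell (pbXMod α g)).f2 ((pbIn κ α g hse.1.1).f2 n) =
        (L.map (pbIn κ α g hse.1.1)).f2 ((L.ell N).f2 n) :=
      DFunLike.congr_fun (congrArg XModHom.f2 (L.natural (pbIn κ α g hse.1.1))) n
    rw [haeq, hnat, hn1, map_one]
  obtain ⟨u, huq⟩ := XModHom.exists_factor φ hφsurj (L.ell (pbXMod α g)) hcond1 hcond2
  refine ⟨⟨⟨?_, ?_⟩, ?_, ?_⟩, iso_map_of_factor L hL φ hφsurj u huq, ?_, ?_⟩
  · apply XModHom.ext
    · ext n; rfl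
    · ext n; rfl
  · intro X w hw
    have hw1 : ∀ x, (w.f1 x).1.2 = 1 := fun x =>
      DFunLike.congr_fun (congrArg XModHom.f1 hw) x
    have hw2 : ∀ x, (w.f2 x).1.2 = 1 := fun x =>
      DFunLike.congr_fun (congrArg XModHom.f2 hw) x
    have hpu : XModHom.comp p (XModHom.comp (pbFst p g) w) = XModHom.triv X Q := by
      apply XModHom.ext
      · ext x
        show p.f1 (w.f1 x).1.1 = 1
        rw [(w.f1 x).2, hw1 x, map_one]
      · ext x
        show p.f2 (w.f2 x).1.1 = 1
        rw [(w.f2 x).2, hw2 x, map_one]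
    obtain ⟨vv, hvv, hvvu⟩ := hjp.1.2 X (XModHom.comp (pbFst p g) w) hpu
    refine ⟨vv, ?_, ?_⟩
    · apply XModHom.ext
      · ext x
        apply Subtype.ext
        apply Prod.ext
        · exact DFunLike.congr_fun (congrArg XModHom.f1 hvv) x
        · exact (hw1 x).symm
      · ext x
        apply Subtype.ext
        apply Prod.ext
        · exact DFunLike.congr_fun (congrArg XModHom.f2 hvv) x
        · exact (hw2 x).symm
    · intro v' hv'
      apply hvvu
      apply XModHom.ext
      · ext x
        exact congrArg (fun z : (pbXMod p g).M => z.1.1)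
          (DFunLike.congr_fun (congrArg XModHom.f1 hv') x)
      · ext x
        exact congrArg (fun z : (pbXMod p g).G => z.1.1)
          (DFunLike.congr_fun (congrArg XModHom.f2 hv') x)
  · intro m'
    obtain ⟨e, he⟩ := hjp.2.1 (g.f1 m')
    exact ⟨⟨(e, m'), he⟩, rfl⟩
  · intro m'
    obtain ⟨e, he⟩ := hjp.2.2 (g.f2 m')
    exact ⟨⟨(e, m'), he⟩, rfl⟩
  · apply XModHom.ext
    · ext n
      apply Subtype.ext
      apply Prod.ext
      · exact DFunLike.congr_fun (congrArg XModHom.f1 hsq1) n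
      · rfl
    · ext n
      apply Subtype.ext
      apply Prod.ext
      · exact DFunLike.congr_fun (congrArg XModHom.f2 hsq1) n
      · rfl
  · apply XModHom.ext
    · ext w0; rfl
    · ext w0; rfl
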